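/- arXiv:2304.01579 — 2 statements merged into one kernel-verified Lean document; each statement's English description precedes it below -/
import Mathlib

section
/- For integers m ≥ 0, n ≥ 1 and any parameter μ ∈ ℝ, the generalised Laguerre polynomial T_{m,n}^{(μ)}(z) = det[(d/dz)^{j+k} L_{m+n}^{(μ+1)}(z)]_{j,k=0}^{n−1} equals (−1)^{n(n−1)/2} · Wr(L_{m+n}^{(n+μ)}, L_{m+n−1}^{(n+μ)}, …, L_{m+1}^{(n+μ)})(z), and also equals Wr(L_{m+1}^{(n+μ)}, L_{m+2}^{(n+μ)}, …, L_{m+n}^{(n+μ)})(z). -/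
noncomputable section

open Finset

/-- Generalized binomial coefficient `C(x, k)` for real `x`. -/
def genBinom (x : ℝ) (k : ℕ) : ℝ :=
  (∏ i ∈ Finset.range k, (x - i)) / (Nat.factorial k)

/-- Associated Laguerre polynomial `L_n^{(α)}(z)`, with the convention `L_n^{(α)} = 0` for `n < 0`. -/
def lagL (n : ℤ) (α : ℝ) : ℝ → ℝ := fun z =>
  if n < 0 then 0
  else ∑ k ∈ Finset.range (n.toNat + 1),
    (-1 : ℝ) ^ k * genBinom ((n : ℝ) + α) (n.toNat - k) * z ^ k / (Nat.factorial k)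

/-- Generalised Laguerre polynomial
`T_{m,n}^{(μ)}(z) = det[(d/dz)^{j+k} L_{m+n}^{(μ+1)}(z)]_{j,k=0}^{n-1}`
(with `T_{m,0}^{(μ)} = 1`, the empty determinant). -/
def genLag (m : ℤ) (n : ℕ) (μ : ℝ) : ℝ → ℝ := fun z =>
  Matrix.det (Matrix.of fun j k : Fin n =>
    iteratedDeriv ((j : ℕ) + (k : ℕ)) (lagL (m + n) (μ + 1)) z)

/-- Wronskian `Wr(f_1, …, f_r)(z) = det[(d/dz)^{j-1} f_k(z)]`. -/
def wronskian {r : ℕ} (f : Fin r → ℝ → ℝ) : ℝ → ℝ := fun z =>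
  Matrix.det (Matrix.of fun j k : Fin r => iteratedDeriv (j : ℕ) (f k) z)

/-- The constant `c_{m,n} = (-1)^{n(2m+1+n)/2} ∏_{j=1}^n (j-1)!/(m+j)!`. -/
def cmn (m n : ℕ) : ℝ :=
  (-1 : ℝ) ^ (n * (2 * m + 1 + n) / 2) *
    ∏ j ∈ Finset.range n, (Nat.factorial j : ℝ) / (Nat.factorial (m + j + 1))

/-- `τ_{m,n}^{(μ)}(z) = det[(z d/dz)^{j+k} L_{m+n}^{(n+μ)}(z)]_{j,k=0}^{n-1}`. -/
def tauP (m : ℤ) (n : ℕ) (μ : ℝ) : ℝ → ℝ := fun z =>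
  Matrix.det (Matrix.of fun j k : Fin n =>
    ((fun (g : ℝ → ℝ) => fun t => t * deriv g t)^[(j : ℕ) + (k : ℕ)]
      (lagL (m + n) ((n : ℝ) + μ))) z)

/-- Hirota bilinear operator `D_z(f • g) = f' g - f g'`. -/
def hirota (f g : ℝ → ℝ) (z : ℝ) : ℝ := deriv f z * g z - f z * deriv g z

/-- Probabilists' Hermite polynomial `He_n` as a real function. -/
def He (n : ℕ) : ℝ → ℝ := fun z => Polynomial.aeval z (Polynomial.hermite n)

/-- The fifth Painlevé equation (with `δ = -1/2`) for `w` with parameters `(a, b, c)`,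
holding at the point `z`. -/
def PV (a b c : ℝ) (w : ℝ → ℝ) (z : ℝ) : Prop :=
  iteratedDeriv 2 w z =
    (1 / (2 * w z) + 1 / (w z - 1)) * (deriv w z) ^ 2
      - (1 / z) * deriv w z
      + (w z - 1) ^ 2 * (a * (w z) ^ 2 + b) / (z ^ 2 * w z)
      + c * w z / z
      - w z * (w z + 1) / (2 * (w z - 1))

/-- The Jimbo–Miwa–Okamoto `σ`-equation `S_V` with parameters `(ν₁, ν₂, ν₃)`,
holding at the point `z`. -/
def SV (ν₁ ν₂ ν₃ : ℝ) (σ : ℝ → ℝ) (z : ℝ) : Prop :=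
  (z * iteratedDeriv 2 σ z) ^ 2 =
    (2 * (deriv σ z) ^ 2 + (ν₁ + ν₂ + ν₃ - z) * deriv σ z + σ z) ^ 2
      - 4 * deriv σ z * (deriv σ z + ν₁) * (deriv σ z + ν₂) * (deriv σ z + ν₃)

lemma genBinom_zero (x : ℝ) : genBinom x 0 = 1 := by simp [genBinom]

lemma genBinom_pascal (x : ℝ) (k : ℕ) :
    genBinom (x + 1) (k + 1) = genBinom x (k + 1) + genBinom x k := by
  have hf : ((k + 1).factorial : ℝ) ≠ 0 := Nat.cast_ne_zero.2 (Nat.factorial_ne_zero _)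
  have hf' : (k.factorial : ℝ) ≠ 0 := Nat.cast_ne_zero.2 (Nat.factorial_ne_zero _)
  have h1 : (∏ i ∈ range (k + 1), (x + 1 - i)) = (x + 1) * ∏ i ∈ range k, (x - i) := by
    rw [Finset.prod_range_succ']
    simp only [Nat.cast_zero, sub_zero]
    rw [mul_comm]
    congr 1
    apply Finset.prod_congr rfl
    intro i _
    push_cast
    ring
  have h2 : (∏ i ∈ range (k + 1), (x - i)) = (∏ i ∈ range k, (x - i)) * (x - k) := by
    rw [Finset.prod_range_succ]
  unfold genBinom
  rw [h1, h2, Nat.factorial_succ]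
  push_cast
  field_simp
  ring

lemma lagL_of_neg {n : ℤ} (h : n < 0) (α : ℝ) : lagL n α = fun _ => 0 := by
  funext z; simp [lagL, h]

lemma lagL_nat (N : ℕ) (α : ℝ) : lagL (N : ℤ) α = fun z =>
    ∑ k ∈ Finset.range (N + 1),
      (-1 : ℝ) ^ k * genBinom ((N : ℝ) + α) (N - k) * z ^ k / (Nat.factorial k) := by
  funext z
  simp [lagL, Int.toNat_natCast]

lemma lagL_zero (α : ℝ) (z : ℝ) : lagL 0 α z = 1 := by
  have := lagL_nat 0 α
  simp only [Nat.cast_zero] at this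
  rw [this]
  simp [genBinom]

lemma hasDerivAt_lagL (n : ℤ) (α : ℝ) (z : ℝ) :
    HasDerivAt (lagL n α) (-(lagL (n - 1) (α + 1) z)) z := by
  rcases lt_or_ge n 0 with h | h
  · rw [lagL_of_neg h, lagL_of_neg (by omega : n - 1 < 0)]
    simpa using hasDerivAt_const z (0 : ℝ)
  · obtain ⟨N, rfl⟩ := Int.eq_ofNat_of_zero_le h
    rw [lagL_nat]
    have key : HasDerivAt (fun z : ℝ => ∑ k ∈ range (N + 1),
        (-1 : ℝ) ^ k * genBinom ((N : ℝ) + α) (N - k) * z ^ k / (Nat.factorial k))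
        (∑ k ∈ range (N + 1),
          ((-1 : ℝ) ^ k * genBinom ((N : ℝ) + α) (N - k) / (Nat.factorial k)) *
            (k * z ^ (k - 1))) z := by
      apply HasDerivAt.fun_sum
      intro k _
      have := (hasDerivAt_pow k z).const_mul
        ((-1 : ℝ) ^ k * genBinom ((N : ℝ) + α) (N - k) / (Nat.factorial k))
      have hf : (fun y : ℝ => (-1 : ℝ) ^ k * genBinom ((N : ℝ) + α) (N - k) * y ^ k
          / (Nat.factorial k)) = fun y : ℝ => ((-1 : ℝ) ^ k * genBinom ((N : ℝ) + α) (N - k)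
          / (Nat.factorial k)) * y ^ k := by
        funext y
        ring
      beta_reduce
      rw [hf]
      exact this
    convert key using 1
    rw [Finset.sum_range_succ']
    simp only [Nat.cast_zero, pow_zero, mul_zero, zero_mul, add_zero]
    rcases Nat.eq_zero_or_pos N with rfl | hN
    · have h0 : ((0:ℕ):ℤ) - 1 < 0 := by norm_num
      rw [lagL_of_neg h0]
      simp
    · have hN1 : ((N : ℤ) - 1) = ((N - 1 : ℕ) : ℤ) := by omega
      rw [hN1, lagL_nat]
      have hrange : N - 1 + 1 = N := by omega
      rw [hrange, ← Finset.sum_neg_distrib]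
      apply Finset.sum_congr rfl
      intro j _
      have hcast : ((N - 1 : ℕ) : ℝ) + (α + 1) = (N : ℝ) + α := by
        have : (1 : ℝ) ≤ N := by exact_mod_cast hN
        push_cast [hN]
        ring
      have hsub : N - (j + 1) = N - 1 - j := by omega
      have hfac : ((j + 1).factorial : ℝ) = (j + 1) * j.factorial := by
        rw [Nat.factorial_succ]; push_cast; ring
      rw [hcast, hsub] at *
      have hj : ((j + 1 : ℕ) : ℝ) * z ^ (j + 1 - 1) = (j + 1) * z ^ j := by norm_num
      rw [hj, hfac]
      have hfj : (j.factorial : ℝ) ≠ 0 := Nat.cast_ne_zero.2 (Nat.factorial_ne_zero _)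
      field_simp
      ring

lemma deriv_lagL (n : ℤ) (α : ℝ) :
    deriv (lagL n α) = fun z => -(lagL (n - 1) (α + 1) z) := by
  funext z
  exact (hasDerivAt_lagL n α z).deriv

lemma iteratedDeriv_lagL (p : ℕ) (n : ℤ) (α : ℝ) (z : ℝ) :
    iteratedDeriv p (lagL n α) z = (-1 : ℝ) ^ p * lagL (n - p) (α + p) z := by
  induction p generalizing n α with
  | zero => simp
  | succ p ih =>
    rw [iteratedDeriv_succ', deriv_lagL]
    have hneg : iteratedDeriv p (fun z => -(lagL (n - 1) (α + 1) z)) z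
        = -(iteratedDeriv p (lagL (n - 1) (α + 1)) z) := by
      have := iteratedDeriv_neg p (lagL (n - 1) (α + 1)) z
      simpa using this
    rw [hneg, ih]
    have h1 : n - 1 - p = n - (p + 1 : ℕ) := by push_cast; ring
    have h2 : α + 1 + p = α + (p + 1 : ℕ) := by push_cast; ring
    rw [h1, h2]
    ring

lemma lagL_rec (p : ℤ) (γ : ℝ) (z : ℝ) :
    lagL p γ z = lagL (p - 1) γ z + lagL p (γ - 1) z := by
  rcases lt_or_ge p 0 with h | h
  · rw [lagL_of_neg h, lagL_of_neg (by omega : p - 1 < 0), lagL_of_neg h]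
    simp
  · obtain ⟨N, rfl⟩ := Int.eq_ofNat_of_zero_le h
    rcases Nat.eq_zero_or_pos N with rfl | hN
    · have h0 : ((0:ℕ):ℤ) - 1 < 0 := by norm_num
      rw [lagL_of_neg h0]
      simp only [Pi.zero_apply, zero_add]
      have h1 : lagL ((0:ℕ):ℤ) γ z = 1 := by norm_num [lagL_zero]
      have h2 : lagL ((0:ℕ):ℤ) (γ - 1) z = 1 := by norm_num [lagL_zero]
      rw [h1, h2]
    · obtain ⟨M, rfl⟩ : ∃ M, N = M + 1 := ⟨N - 1, by omega⟩
      have e1 : ((M + 1 : ℕ) : ℤ) - 1 = ((M : ℕ) : ℤ) := by push_cast; ring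
      rw [e1, lagL_nat, lagL_nat, lagL_nat]
      have ecast : ((M + 1 : ℕ) : ℝ) + (γ - 1) = (M : ℝ) + γ := by push_cast; ring
      have ecast2 : ((M + 1 : ℕ) : ℝ) + γ = ((M : ℝ) + γ) + 1 := by push_cast; ring
      rw [ecast, ecast2]
      dsimp only
      rw [Finset.sum_range_succ, Finset.sum_range_succ (n := M + 1)]
      have hlast : (-1 : ℝ) ^ (M + 1) * genBinom ((M : ℝ) + γ + 1) (M + 1 - (M + 1)) *
            z ^ (M + 1) / ((M + 1).factorial)
          = (-1 : ℝ) ^ (M + 1) * genBinom ((M : ℝ) + γ) (M + 1 - (M + 1)) *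
            z ^ (M + 1) / ((M + 1).factorial) := by
        simp [genBinom_zero]
      rw [hlast]
      have hstep : ∀ k ∈ range (M + 1),
          (-1 : ℝ) ^ k * genBinom ((M : ℝ) + γ + 1) (M + 1 - k) * z ^ k / (k.factorial)
          = (-1 : ℝ) ^ k * genBinom ((M : ℝ) + γ) (M - k) * z ^ k / (k.factorial)
            + (-1 : ℝ) ^ k * genBinom ((M : ℝ) + γ) (M + 1 - k) * z ^ k / (k.factorial) := by
        intro k hk
        have hk' : k ≤ M := by simpa using Nat.lt_succ_iff.mp (Finset.mem_range.mp hk)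
        have h1 : M + 1 - k = (M - k) + 1 := by omega
        rw [h1, genBinom_pascal]
        ring
      rw [Finset.sum_congr rfl hstep, Finset.sum_add_distrib]
      ring

lemma lagL_congr {a a' : ℤ} {b b' : ℝ} (ha : a = a') (hb : b = b') (z : ℝ) :
    lagL a b z = lagL a' b' z := by rw [ha, hb]

lemma lagL_expand (k : ℕ) (q : ℤ) (γ : ℝ) (z : ℝ) :
    lagL q γ z
      = ∑ s ∈ range (k + 1), (k.choose s : ℝ) * lagL (q - k + s) (γ - s) z := by
  induction k generalizing q γ with
  | zero => simp
  | succ k ih =>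
    rw [lagL_rec q γ z]
    rw [Finset.sum_range_succ' _ (k + 1)]
    have hF0 : ((k + 1).choose 0 : ℝ) * lagL (q - ((k+1:ℕ):ℤ) + ((0:ℕ):ℤ)) (γ - ((0:ℕ):ℝ)) z
        = lagL (q - ((k+1:ℕ):ℤ)) γ z := by
      simp
    have hsplit : ∀ s ∈ range (k + 1),
        ((k + 1).choose (s + 1) : ℝ)
            * lagL (q - ((k+1:ℕ):ℤ) + ((s+1:ℕ):ℤ)) (γ - ((s+1:ℕ):ℝ)) z
        = (k.choose s : ℝ) * lagL (q - ((k+1:ℕ):ℤ) + ((s+1:ℕ):ℤ)) (γ - ((s+1:ℕ):ℝ)) z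
          + (k.choose (s + 1) : ℝ)
              * lagL (q - ((k+1:ℕ):ℤ) + ((s+1:ℕ):ℤ)) (γ - ((s+1:ℕ):ℝ)) z := by
      intro s _
      rw [Nat.choose_succ_succ]
      push_cast
      ring
    rw [Finset.sum_congr rfl hsplit, Finset.sum_add_distrib]
    have hT1 : ∑ s ∈ range (k + 1),
        (k.choose s : ℝ) * lagL (q - ((k+1:ℕ):ℤ) + ((s+1:ℕ):ℤ)) (γ - ((s+1:ℕ):ℝ)) z
        = lagL q (γ - 1) z := by
      rw [ih q (γ - 1)]
      apply Finset.sum_congr rfl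
      intro s _
      rw [lagL_congr (a' := q - (k:ℕ) + (s:ℕ)) (b' := (γ - 1) - (s:ℕ))
        (by push_cast; ring) (by push_cast; ring) z]
    have expand : lagL (q - 1) γ z
        = (∑ s ∈ range k,
            (k.choose (s+1) : ℝ) * lagL (q - 1 - (k:ℕ) + ((s+1:ℕ):ℤ)) (γ - ((s+1:ℕ):ℝ)) z)
          + (k.choose 0 : ℝ) * lagL (q - 1 - (k:ℕ) + ((0:ℕ):ℤ)) (γ - ((0:ℕ):ℝ)) z := by
      rw [ih (q - 1) γ, Finset.sum_range_succ' _ k]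
    have hT2 : lagL (q - ((k+1:ℕ):ℤ)) γ z + ∑ s ∈ range (k + 1),
        (k.choose (s + 1) : ℝ) * lagL (q - ((k+1:ℕ):ℤ) + ((s+1:ℕ):ℤ)) (γ - ((s+1:ℕ):ℝ)) z
        = lagL (q - 1) γ z := by
      rw [Finset.sum_range_succ]
      have ezero : (k.choose (k + 1) : ℝ)
          * lagL (q - ((k+1:ℕ):ℤ) + ((k+1:ℕ):ℤ)) (γ - ((k+1:ℕ):ℝ)) z = 0 := by
        simp [Nat.choose_eq_zero_of_lt (Nat.lt_succ_self k)]
      rw [ezero, add_zero, expand]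
      rw [add_comm]
      congr 1
      · apply Finset.sum_congr rfl
        intro s _
        rw [lagL_congr (a := q - ((k+1:ℕ):ℤ) + ((s+1:ℕ):ℤ)) (a' := q - 1 - (k:ℕ) + ((s+1:ℕ):ℤ))
          (by push_cast; ring) rfl z]
      · rw [lagL_congr (a := q - ((k+1:ℕ):ℤ)) (a' := q - 1 - (k:ℕ) + ((0:ℕ):ℤ)) (b := γ)
          (b' := γ - ((0:ℕ):ℝ)) (by push_cast; ring) (by push_cast; ring) z]
        simp
    rw [hT1, hF0]
    linarith [hT2]


def Jmat (n : ℕ) : Matrix (Fin n) (Fin n) ℝ :=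
  Matrix.of fun s k => if k = Fin.rev s then 1 else 0

lemma det_Jmat (n : ℕ) : (Jmat n).det = (-1 : ℝ) ^ (∑ i ∈ range n, i) := by
  induction n with
  | zero => simp [Jmat]
  | succ n ih =>
    rw [Matrix.det_succ_row_zero]
    rw [Finset.sum_eq_single (Fin.last n)]
    · have h00 : Jmat (n+1) 0 (Fin.last n) = 1 := by
        simp [Jmat, Fin.rev_zero]
      have hsub : (Jmat (n+1)).submatrix Fin.succ (Fin.last n).succAbove = Jmat n := by
        ext i j
        simp only [Matrix.submatrix_apply, Fin.succAbove_last, Jmat, Matrix.of_apply]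
        rw [Fin.rev_succ]
        simp
      rw [h00, hsub, ih]
      rw [Finset.sum_range_succ]
      simp [pow_add]
      ring
    · intro j _ hj
      have : Jmat (n+1) 0 j = 0 := by
        simp only [Jmat, Matrix.of_apply]
        rw [if_neg]
        rw [Fin.rev_zero]
        exact fun h => hj (by simpa using h)
      rw [this]; ring
    · intro h
      exact absurd (Finset.mem_univ _) h


/-- `T_{m,n}^{(μ)}` as Wronskians of associated Laguerre polynomials. -/
theorem genLag_eq_wronskian (m n : ℕ) (hn : 1 ≤ n) (μ : ℝ) (z : ℝ) :
    genLag (m : ℤ) n μ z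
        = (-1 : ℝ) ^ (n * (n - 1) / 2) *
            wronskian (fun k : Fin n => lagL ((m : ℤ) + n - (k : ℕ)) ((n : ℝ) + μ)) z
      ∧ genLag (m : ℤ) n μ z
        = wronskian (fun k : Fin n => lagL ((m : ℤ) + 1 + (k : ℕ)) ((n : ℝ) + μ)) z := by
  classical
  set e := ∑ i ∈ range n, i with he
  have hprod : (∏ j : Fin n, (-1 : ℝ) ^ (j : ℕ)) = (-1 : ℝ) ^ e := by
    rw [Finset.prod_pow_eq_pow_sum]
    congr 1
    exact Fin.sum_univ_eq_sum_range (fun i => i) n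
  have hsq : (-1 : ℝ) ^ e * (-1 : ℝ) ^ e = 1 := by
    rw [← pow_add]
    exact Even.neg_one_pow ⟨e, rfl⟩
  -- the matrices
  set A : Matrix (Fin n) (Fin n) ℝ := Matrix.of (fun j k : Fin n =>
    lagL ((m : ℤ) + n - (j : ℕ) - (k : ℕ)) (μ + 1 + (j : ℕ) + (k : ℕ)) z) with hA
  set B : Matrix (Fin n) (Fin n) ℝ := Matrix.of (fun j k : Fin n =>
    lagL ((m : ℤ) + n - (j : ℕ) - (k : ℕ)) ((n : ℝ) + μ + (j : ℕ)) z) with hB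
  set V : Matrix (Fin n) (Fin n) ℝ := Matrix.of (fun s k : Fin n =>
    ((n - 1 - (k : ℕ)).choose (n - 1 - (s : ℕ)) : ℝ)) with hV
  -- Step 1 : genLag = det A
  have step1 : genLag (m : ℤ) n μ z = A.det := by
    have hM : (Matrix.of fun j k : Fin n =>
        iteratedDeriv ((j : ℕ) + (k : ℕ)) (lagL ((m : ℤ) + n) (μ + 1)) z)
        = Matrix.of (fun j k : Fin n => (-1 : ℝ) ^ (j : ℕ) *
            ((-1 : ℝ) ^ (k : ℕ) * A j k)) := by
      ext j k
      simp only [Matrix.of_apply]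
      rw [iteratedDeriv_lagL]
      rw [hA]
      simp only [Matrix.of_apply]
      rw [lagL_congr (a := (m : ℤ) + n - ((j : ℕ) + (k : ℕ) : ℕ))
        (a' := (m : ℤ) + n - (j : ℕ) - (k : ℕ))
        (b := μ + 1 + ((j : ℕ) + (k : ℕ) : ℕ)) (b' := μ + 1 + (j : ℕ) + (k : ℕ))
        (by push_cast; ring) (by push_cast; ring) z]
      rw [pow_add]
      ring
    rw [genLag, hM]
    have hcol := Matrix.det_mul_column (fun j : Fin n => (-1:ℝ)^(j:ℕ))
      (fun j k : Fin n => (-1:ℝ)^(k:ℕ) * A j k)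
    beta_reduce at hcol
    rw [hcol]
    have hof : (Matrix.det fun j k : Fin n => (-1:ℝ)^(k:ℕ) * A j k)
        = Matrix.det (Matrix.of fun j k : Fin n => (-1:ℝ)^(k:ℕ) * A j k) := rfl
    rw [hof, Matrix.det_mul_row (fun k : Fin n => (-1:ℝ)^(k:ℕ)) A, hprod, ← mul_assoc, hsq, one_mul]
  -- Step 2 : B = A * V, det V = 1
  have step2 : B = A * V := by
    ext j k
    rw [Matrix.mul_apply]
    have hkn : (k : ℕ) ≤ n - 1 := by omega
    have expand := lagL_expand (n - 1 - (k : ℕ)) ((m : ℤ) + n - (j : ℕ) - (k : ℕ))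
      ((n : ℝ) + μ + (j : ℕ)) z
    have hext : ∑ s' ∈ range (n - 1 - (k : ℕ) + 1),
          (((n - 1 - (k : ℕ)).choose s' : ℝ)) *
            lagL ((m : ℤ) + n - (j : ℕ) - (k : ℕ) - ((n - 1 - (k : ℕ) : ℕ) : ℤ) + (s' : ℕ))
              ((n : ℝ) + μ + (j : ℕ) - (s' : ℕ)) z
        = ∑ s' ∈ range n,
          (((n - 1 - (k : ℕ)).choose s' : ℝ)) *
            lagL ((m : ℤ) + n - (j : ℕ) - (k : ℕ) - ((n - 1 - (k : ℕ) : ℕ) : ℤ) + (s' : ℕ))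
              ((n : ℝ) + μ + (j : ℕ) - (s' : ℕ)) z := by
      apply Finset.sum_subset
      · apply Finset.range_subset_range.2
        omega
      · intro s' _ hs'
        have hlt : n - 1 - (k : ℕ) < s' := by
          simp only [Finset.mem_range, not_lt] at hs'
          omega
        rw [Nat.choose_eq_zero_of_lt hlt]
        simp
    have hLHS : B j k = ∑ s' ∈ range n,
          (((n - 1 - (k : ℕ)).choose s' : ℝ)) *
            lagL ((m : ℤ) + n - (j : ℕ) - (k : ℕ) - ((n - 1 - (k : ℕ) : ℕ) : ℤ) + (s' : ℕ))
              ((n : ℝ) + μ + (j : ℕ) - (s' : ℕ)) z := by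
      rw [hB]
      simp only [Matrix.of_apply]
      rw [expand]
      exact hext
    have hfin : ∑ s : Fin n, A j s * V s k
        = ∑ s ∈ range n, (fun s : ℕ =>
            lagL ((m : ℤ) + n - (j : ℕ) - (s : ℕ)) (μ + 1 + (j : ℕ) + (s : ℕ)) z *
              ((n - 1 - (k : ℕ)).choose (n - 1 - s) : ℝ)) s := by
      rw [← Fin.sum_univ_eq_sum_range (fun s : ℕ =>
        lagL ((m : ℤ) + n - (j : ℕ) - (s : ℕ)) (μ + 1 + (j : ℕ) + (s : ℕ)) z *
          ((n - 1 - (k : ℕ)).choose (n - 1 - s) : ℝ)) n]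
      apply Finset.sum_congr rfl
      intro s _
      rw [hA, hV]
      simp only [Matrix.of_apply]
    rw [hLHS, hfin, ← Finset.sum_range_reflect]
    apply Finset.sum_congr rfl
    intro s' hs'
    have hs'n : s' ≤ n - 1 := by
      have := Finset.mem_range.mp hs'
      omega
    simp only
    have e1 : (m : ℤ) + n - (j : ℕ) - (k : ℕ) - ((n - 1 - (k : ℕ) : ℕ) : ℤ) + ((n - 1 - s' : ℕ) : ℤ)
        = (m : ℤ) + n - (j : ℕ) - (s' : ℕ) := by omega
    have e2 : (n : ℝ) + μ + (j : ℕ) - ((n - 1 - s' : ℕ) : ℝ)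
        = μ + 1 + (j : ℕ) + (s' : ℕ) := by
      rw [Nat.cast_sub hs'n, Nat.cast_sub hn]
      push_cast
      ring
    rw [lagL_congr e1 e2 z, mul_comm]
  have hdetV : V.det = 1 := by
    have htri : V.BlockTriangular OrderDual.toDual := by
      intro s k hlt
      have : (s : ℕ) < (k : ℕ) := hlt
      rw [hV]
      simp only [Matrix.of_apply]
      rw [Nat.choose_eq_zero_of_lt (by omega)]
      exact Nat.cast_zero
    rw [Matrix.det_of_lowerTriangular V htri]
    apply Finset.prod_eq_one
    intro s _
    rw [hV]
    simp
  have hdetB : B.det = A.det := by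
    rw [step2, Matrix.det_mul, hdetV, mul_one]
  have hepow : (-1 : ℝ) ^ (n * (n - 1) / 2) = (-1 : ℝ) ^ e := by
    rw [he, Finset.sum_range_id]
  -- first wronskian
  have hw1 : wronskian (fun k : Fin n => lagL ((m : ℤ) + n - (k : ℕ)) ((n : ℝ) + μ)) z
      = (-1 : ℝ) ^ e * B.det := by
    have hW : (Matrix.of fun j k : Fin n =>
        iteratedDeriv (j : ℕ) (lagL ((m : ℤ) + n - (k : ℕ)) ((n : ℝ) + μ)) z)
        = Matrix.of (fun j k : Fin n => (-1 : ℝ) ^ (j : ℕ) * B j k) := by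
      ext j k
      simp only [Matrix.of_apply]
      rw [iteratedDeriv_lagL]
      rw [hB]
      simp only [Matrix.of_apply]
      rw [lagL_congr (a := (m : ℤ) + n - (k : ℕ) - (j : ℕ))
        (a' := (m : ℤ) + n - (j : ℕ) - (k : ℕ))
        (b := (n : ℝ) + μ + (j : ℕ)) (b' := (n : ℝ) + μ + (j : ℕ))
        (by ring) rfl z]
    rw [wronskian, hW, Matrix.det_mul_column (fun j : Fin n => (-1:ℝ)^(j:ℕ)) B, hprod]
  -- second wronskian
  have hw2 : wronskian (fun k : Fin n => lagL ((m : ℤ) + 1 + (k : ℕ)) ((n : ℝ) + μ)) z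
      = (-1 : ℝ) ^ e * (B * Jmat n).det := by
    have hBJ : ∀ j k : Fin n, (B * Jmat n) j k = B j (Fin.rev k) := by
      intro j k
      rw [Matrix.mul_apply]
      rw [Finset.sum_eq_single (Fin.rev k)]
      · have : Jmat n (Fin.rev k) k = 1 := by
          simp [Jmat, Fin.rev_rev]
        rw [this, mul_one]
      · intro s _ hs
        have : Jmat n s k = 0 := by
          simp only [Jmat, Matrix.of_apply]
          rw [if_neg]
          intro h
          exact hs (by rw [h, Fin.rev_rev])
        rw [this, mul_zero]
      · intro h
        exact absurd (Finset.mem_univ _) h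
    have hW : (Matrix.of fun j k : Fin n =>
        iteratedDeriv (j : ℕ) (lagL ((m : ℤ) + 1 + (k : ℕ)) ((n : ℝ) + μ)) z)
        = Matrix.of (fun j k : Fin n => (-1 : ℝ) ^ (j : ℕ) * (B * Jmat n) j k) := by
      ext j k
      simp only [Matrix.of_apply]
      rw [iteratedDeriv_lagL, hBJ j k]
      rw [hB]
      simp only [Matrix.of_apply]
      have hrev : ((Fin.rev k : Fin n) : ℕ) = n - 1 - (k : ℕ) := by
        simp [Fin.rev]
        omega
      rw [lagL_congr (a := (m : ℤ) + 1 + (k : ℕ) - (j : ℕ))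
        (a' := (m : ℤ) + n - (j : ℕ) - ((Fin.rev k : Fin n) : ℕ))
        (b := (n : ℝ) + μ + (j : ℕ)) (b' := (n : ℝ) + μ + (j : ℕ))
        (by rw [hrev]; omega) rfl z]
    rw [wronskian, hW, Matrix.det_mul_column (fun j : Fin n => (-1:ℝ)^(j:ℕ)) (B * Jmat n), hprod]
  constructor
  · rw [step1, hepow, hw1, hdetB, ← mul_assoc, hsq, one_mul]
  · rw [step1, hw2, Matrix.det_mul, det_Jmat, ← he, hdetB]
    rw [mul_comm A.det ((-1:ℝ)^e), ← mul_assoc, hsq, one_mul]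
end
end

section
/- For integers m ≥ 1, n ≥ 1 and any parameter μ ∈ ℝ, the generalised Laguerre polynomial satisfies the Toda-type differential-difference equation T_{m,n}^{(μ)}(z) · (d²/dz²)T_{m,n}^{(μ)}(z) − ((d/dz)T_{m,n}^{(μ)}(z))² = T_{m+1,n−1}^{(μ)}(z) · T_{m−1,n+1}^{(μ)}(z). -/
noncomputable section

open Finset

open Matrix Finset Equiv
open scoped ContDiff

lemma det_two_border {R : Type*} [CommRing R] :
    ∀ (t : ℕ) (D : Matrix (Fin (t+2)) (Fin (t+2)) R),
    (∀ k : Fin (t+2), (k:ℕ) < t → ∀ j, D j k = if j = k then 1 else 0) →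
    D.det = D ⟨t, by omega⟩ ⟨t, by omega⟩ * D ⟨t+1, by omega⟩ ⟨t+1, by omega⟩
          - D ⟨t, by omega⟩ ⟨t+1, by omega⟩ * D ⟨t+1, by omega⟩ ⟨t, by omega⟩
  | 0, D, h => by
      rw [Matrix.det_fin_two]
      rfl
  | (t+1), D, h => by
      rw [Matrix.det_succ_column D 0]
      rw [Finset.sum_eq_single (0 : Fin (t+3))]
      · have h00 : D 0 0 = 1 := by
          rw [h 0 (by simp) 0]; simp
        rw [h00]
        simp only [Fin.val_zero, pow_zero, one_mul, mul_one, Fin.succAbove_zero]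
        rw [det_two_border t (D.submatrix Fin.succ Fin.succ) (fun k hk j => by
          rw [Matrix.submatrix_apply, h k.succ (by simpa using Nat.succ_lt_succ hk) j.succ]
          simp [Fin.succ_inj])]
        simp [Fin.succ_mk]
      · intro i _ hi
        rw [h 0 (by simp) i]
        simp [hi]
      · simp

lemma adjugate_eq_minor {R : Type*} [CommRing R] {N : ℕ}
    (A : Matrix (Fin (N+1)) (Fin (N+1)) R) (i j : Fin (N+1)) :
    adjugate A i j = (-1:R)^((i:ℕ)+(j:ℕ)) * (A.submatrix j.succAbove i.succAbove).det := by
  rw [adjugate_apply, Matrix.det_succ_row _ j]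
  rw [Finset.sum_eq_single i]
  · rw [Matrix.updateRow_self]
    have h1 : (Pi.single i (1:R) : Fin (N+1) → R) i = 1 := by simp
    have h2 : (A.updateRow j (Pi.single i 1)).submatrix j.succAbove i.succAbove
        = A.submatrix j.succAbove i.succAbove := by
      ext a b
      simp only [Matrix.submatrix_apply]
      rw [Matrix.updateRow_ne (Fin.succAbove_ne j a)]
    rw [h1, h2, add_comm (j:ℕ) (i:ℕ), mul_one]
  · intro b _ hb
    rw [Matrix.updateRow_self]
    have : (Pi.single i (1:R) : Fin (N+1) → R) b = 0 := by simp [Pi.single_apply, hb.symm]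
    rw [this, mul_zero, zero_mul]
  · simp

lemma jacobi_pre {R : Type*} [CommRing R] (t : ℕ) (A : Matrix (Fin (t+2)) (Fin (t+2)) R) :
    A.det * (A.det * (A.submatrix (Fin.castSucc ∘ Fin.castSucc) (Fin.castSucc ∘ Fin.castSucc)).det)
      = A.det * (adjugate A ⟨t, by omega⟩ ⟨t, by omega⟩ * adjugate A ⟨t+1, by omega⟩ ⟨t+1, by omega⟩
          - adjugate A ⟨t, by omega⟩ ⟨t+1, by omega⟩ * adjugate A ⟨t+1, by omega⟩ ⟨t, by omega⟩) := by
  set B : Matrix (Fin (t+2)) (Fin (t+2)) R :=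
    Matrix.of (fun j k => if (k:ℕ) < t then (if j = k then (1:R) else 0) else adjugate A j k) with hBdef
  set C : Matrix (Fin (t+2)) (Fin (t+2)) R :=
    Matrix.of (fun j k => if (k:ℕ) < t then A j k else A.det * (if j = k then 1 else 0)) with hCdef
  have hAB : A * B = C := by
    ext j k
    rw [Matrix.mul_apply]
    by_cases hk : (k:ℕ) < t
    · simp only [hBdef, hCdef, Matrix.of_apply, hk, if_true, mul_ite, mul_one, mul_zero]
      simp
    · simp only [hBdef, hCdef, Matrix.of_apply, hk, if_false]
      rw [← Matrix.mul_apply, Matrix.mul_adjugate]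
      simp [Matrix.one_apply, mul_ite]
  have hBval : ∀ (p : Fin (t+2)), t ≤ (p:ℕ) → ∀ j, B j p = adjugate A j p := by
    intro p hp j
    simp [hBdef, Matrix.of_apply, Nat.not_lt.mpr hp]
  have hB : B.det = adjugate A ⟨t, by omega⟩ ⟨t, by omega⟩ * adjugate A ⟨t+1, by omega⟩ ⟨t+1, by omega⟩
      - adjugate A ⟨t, by omega⟩ ⟨t+1, by omega⟩ * adjugate A ⟨t+1, by omega⟩ ⟨t, by omega⟩ := by
    rw [det_two_border t B (fun k hk j => by simp [hBdef, Matrix.of_apply, hk])]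
    simp only [hBval ⟨t, by omega⟩ (by simp), hBval ⟨t+1, by omega⟩ (by simp)]
  have hC : C.det = A.det * (A.det *
      (A.submatrix (Fin.castSucc ∘ Fin.castSucc) (Fin.castSucc ∘ Fin.castSucc)).det) := by
    have hClast : ∀ i, C i (Fin.last (t+1)) = A.det * (if i = Fin.last (t+1) then 1 else 0) := by
      intro i
      simp [hCdef, Matrix.of_apply, Fin.last]
    rw [Matrix.det_succ_column C (Fin.last (t+1))]
    rw [Finset.sum_eq_single (Fin.last (t+1))]
    · rw [hClast, if_pos rfl, mul_one, Fin.succAbove_last]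
      have hsign : ((-1:R)) ^ ((Fin.last (t+1) : ℕ) + (Fin.last (t+1) : ℕ)) = 1 :=
        Even.neg_one_pow ⟨t+1, by simp [Fin.last]⟩
      rw [hsign, one_mul]
      congr 1
      -- second expansion
      have hC1last : ∀ i : Fin (t+1), (C.submatrix Fin.castSucc Fin.castSucc) i (Fin.last t) =
          A.det * (if i = Fin.last t then 1 else 0) := by
        intro i
        simp only [Matrix.submatrix_apply, hCdef, Matrix.of_apply]
        rw [if_neg (by simp [Fin.last])]
        congr 1
        simp [Fin.castSucc_inj]
      rw [Matrix.det_succ_column (C.submatrix Fin.castSucc Fin.castSucc) (Fin.last t)]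
      rw [Finset.sum_eq_single (Fin.last t)]
      · rw [hC1last, if_pos rfl, mul_one, Fin.succAbove_last]
        have hsign : ((-1:R)) ^ ((Fin.last t : ℕ) + (Fin.last t : ℕ)) = 1 :=
          Even.neg_one_pow ⟨t, by simp [Fin.last]⟩
        rw [hsign, one_mul]
        rw [Matrix.submatrix_submatrix]
        refine congrArg (fun x => A.det * Matrix.det x) ?_
        ext a b
        simp only [Matrix.submatrix_apply, hCdef, Matrix.of_apply, Function.comp_apply]
        rw [if_pos (by simpa using b.isLt)]
      · intro i _ hi
        rw [hC1last, if_neg hi, mul_zero, mul_zero, zero_mul]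
      · simp
    · intro i _ hi
      rw [hClast, if_neg hi, mul_zero, mul_zero, zero_mul]
    · simp
  calc A.det * (A.det * (A.submatrix (Fin.castSucc ∘ Fin.castSucc) (Fin.castSucc ∘ Fin.castSucc)).det)
      = C.det := hC.symm
    _ = (A * B).det := by rw [hAB]
    _ = A.det * B.det := Matrix.det_mul A B
    _ = _ := by rw [hB]

lemma jacobi_adj {R : Type*} [CommRing R] (t : ℕ) (A : Matrix (Fin (t+2)) (Fin (t+2)) R) :
    A.det * (A.submatrix (Fin.castSucc ∘ Fin.castSucc) (Fin.castSucc ∘ Fin.castSucc)).det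
      = adjugate A ⟨t, by omega⟩ ⟨t, by omega⟩ * adjugate A ⟨t+1, by omega⟩ ⟨t+1, by omega⟩
          - adjugate A ⟨t, by omega⟩ ⟨t+1, by omega⟩ * adjugate A ⟨t+1, by omega⟩ ⟨t, by omega⟩ := by
  -- first for the generic matrix
  have key : ∀ (X : Matrix (Fin (t+2)) (Fin (t+2)) (MvPolynomial (Fin (t+2) × Fin (t+2)) ℤ)),
      X = Matrix.mvPolynomialX _ _ ℤ →
      X.det * (X.submatrix (Fin.castSucc ∘ Fin.castSucc) (Fin.castSucc ∘ Fin.castSucc)).det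
        = adjugate X ⟨t, by omega⟩ ⟨t, by omega⟩ * adjugate X ⟨t+1, by omega⟩ ⟨t+1, by omega⟩
            - adjugate X ⟨t, by omega⟩ ⟨t+1, by omega⟩ * adjugate X ⟨t+1, by omega⟩ ⟨t, by omega⟩ := by
    intro X hX
    have hdet : X.det ≠ 0 := by
      rw [hX]; exact Matrix.det_mvPolynomialX_ne_zero _ _
    exact mul_left_cancel₀ hdet (jacobi_pre t X)
  set φ : MvPolynomial (Fin (t+2) × Fin (t+2)) ℤ →+* R :=
    MvPolynomial.eval₂Hom (Int.castRingHom R) (fun p => A p.1 p.2) with hφ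
  have hmap : φ.mapMatrix (Matrix.mvPolynomialX (Fin (t+2)) (Fin (t+2)) ℤ) = A := by
    exact Matrix.mvPolynomialX_map_eval₂ (Int.castRingHom R) A
  have := congrArg φ (key _ rfl)
  rw [_root_.map_mul, map_sub, _root_.map_mul, _root_.map_mul] at this
  rw [RingHom.map_det, RingHom.map_det] at this
  have hadj : ∀ i j, φ (adjugate (Matrix.mvPolynomialX (Fin (t+2)) (Fin (t+2)) ℤ) i j)
      = adjugate A i j := by
    intro i j
    calc φ (adjugate (Matrix.mvPolynomialX (Fin (t+2)) (Fin (t+2)) ℤ) i j)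
        = (φ.mapMatrix (adjugate (Matrix.mvPolynomialX (Fin (t+2)) (Fin (t+2)) ℤ))) i j := rfl
      _ = (adjugate (φ.mapMatrix (Matrix.mvPolynomialX (Fin (t+2)) (Fin (t+2)) ℤ))) i j := by
          rw [RingHom.map_adjugate]
      _ = adjugate A i j := by rw [hmap]
  have hsub : φ.mapMatrix ((Matrix.mvPolynomialX (Fin (t+2)) (Fin (t+2)) ℤ).submatrix
        (Fin.castSucc ∘ Fin.castSucc) (Fin.castSucc ∘ Fin.castSucc))
      = A.submatrix (Fin.castSucc ∘ Fin.castSucc) (Fin.castSucc ∘ Fin.castSucc) := by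
    rw [← hmap]
    rfl
  rw [hmap, hsub] at this
  rw [hadj, hadj, hadj, hadj] at this
  exact this

lemma jacobi_minor {R : Type*} [CommRing R] (t : ℕ) (A : Matrix (Fin (t+2)) (Fin (t+2)) R) :
    A.det * (A.submatrix (Fin.castSucc ∘ Fin.castSucc) (Fin.castSucc ∘ Fin.castSucc)).det
      = (A.submatrix (⟨t, by omega⟩ : Fin (t+2)).succAbove (⟨t, by omega⟩ : Fin (t+2)).succAbove).det
          * (A.submatrix (⟨t+1, by omega⟩ : Fin (t+2)).succAbove (⟨t+1, by omega⟩ : Fin (t+2)).succAbove).det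
        - (A.submatrix (⟨t+1, by omega⟩ : Fin (t+2)).succAbove (⟨t, by omega⟩ : Fin (t+2)).succAbove).det
          * (A.submatrix (⟨t, by omega⟩ : Fin (t+2)).succAbove (⟨t+1, by omega⟩ : Fin (t+2)).succAbove).det := by
  have h1 : (-1:R)^(t+t) = 1 := Even.neg_one_pow ⟨t, rfl⟩
  have h2 : (-1:R)^(t+1+(t+1)) = 1 := Even.neg_one_pow ⟨t+1, rfl⟩
  have h3 : (-1:R)^(t+(t+1)) = -1 := Odd.neg_one_pow ⟨t, by ring⟩
  have h4 : (-1:R)^(t+1+t) = -1 := Odd.neg_one_pow ⟨t, by ring⟩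
  rw [jacobi_adj t A, adjugate_eq_minor, adjugate_eq_minor, adjugate_eq_minor, adjugate_eq_minor]
  simp only [Fin.val_mk, h1, h2, h3, h4]
  ring

lemma deriv_det_col {N : ℕ} (M : Fin N → Fin N → ℝ → ℝ)
    (hd : ∀ j k, Differentiable ℝ (M j k)) (z : ℝ) :
    deriv (fun x => (Matrix.of fun j k => M j k x).det) z
      = ∑ k : Fin N, (Matrix.of fun j k' =>
          if k' = k then deriv (M j k') z else M j k' z).det := by
  have hfun : (fun x => (Matrix.of fun j k => M j k x).det)
      = fun x => ∑ σ : Equiv.Perm (Fin N), ((Equiv.Perm.sign σ : ℤ) : ℝ) * ∏ i, M (σ i) i x := by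
    funext x
    simp [Matrix.det_apply, Units.smul_def, zsmul_eq_mul]
  have hprod : ∀ σ : Equiv.Perm (Fin N),
      HasDerivAt (fun x => ∏ i, M (σ i) i x)
        (∑ i, (∏ j ∈ Finset.univ.erase i, M (σ j) j z) • deriv (M (σ i) i) z) z := by
    intro σ
    exact HasDerivAt.fun_finsetProd (fun i _ => ((hd (σ i) i) z).hasDerivAt)
  have hsum : HasDerivAt (fun x => ∑ σ : Equiv.Perm (Fin N),
        ((Equiv.Perm.sign σ : ℤ) : ℝ) * ∏ i, M (σ i) i x)
      (∑ σ : Equiv.Perm (Fin N), ((Equiv.Perm.sign σ : ℤ) : ℝ) *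
        ∑ i, (∏ j ∈ Finset.univ.erase i, M (σ j) j z) • deriv (M (σ i) i) z) z :=
    HasDerivAt.fun_sum (fun σ _ => ((hprod σ).const_mul _))
  rw [hfun, hsum.deriv]
  simp only [Finset.mul_sum]
  rw [Finset.sum_comm]
  refine Finset.sum_congr rfl fun k _ => ?_
  rw [Matrix.det_apply]
  refine Finset.sum_congr rfl fun σ _ => ?_
  rw [Units.smul_def, zsmul_eq_mul]
  congr 1
  rw [smul_eq_mul, ← Finset.prod_erase_mul Finset.univ _ (Finset.mem_univ k)]
  congr 1
  · exact Finset.prod_congr rfl fun j hj => (if_neg (Finset.ne_of_mem_erase hj)).symm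
  · exact (if_pos rfl).symm

lemma deriv_det_row {N : ℕ} (M : Fin N → Fin N → ℝ → ℝ)
    (hd : ∀ j k, Differentiable ℝ (M j k)) (z : ℝ) :
    deriv (fun x => (Matrix.of fun j k => M j k x).det) z
      = ∑ j : Fin N, (Matrix.of fun j' k =>
          if j' = j then deriv (M j' k) z else M j' k z).det := by
  have htr : (fun x => (Matrix.of fun j k => M j k x).det)
      = (fun x => (Matrix.of fun j k => M k j x).det) := by
    funext x
    rw [← Matrix.det_transpose]
    rfl
  rw [htr, deriv_det_col (fun j k x => M k j x) (fun j k => hd k j) z]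
  refine Finset.sum_congr rfl fun j _ => ?_
  rw [← Matrix.det_transpose]
  rfl

lemma hankel_diff (f : ℝ → ℝ) (hf : ContDiff ℝ ∞ f) (a : ℕ) :
    Differentiable ℝ (iteratedDeriv a f) := by
  rw [iteratedDeriv_eq_iterate]
  exact (hf.iterate_deriv a).differentiable (by simp)

lemma hankel_deriv (f : ℝ → ℝ) (hf : ContDiff ℝ ∞ f) (t : ℕ) (z : ℝ) :
    deriv (fun x => (Matrix.of fun j k : Fin (t+1) => iteratedDeriv ((j:ℕ)+(k:ℕ)) f x).det) z
      = (Matrix.of fun j k : Fin (t+1) =>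
          iteratedDeriv ((j:ℕ)+(k:ℕ) + (if (k:ℕ) = t then 1 else 0)) f z).det := by
  rw [deriv_det_col (fun j k x => iteratedDeriv ((j:ℕ)+(k:ℕ)) f x)
      (fun j k => hankel_diff f hf _) z]
  rw [Finset.sum_eq_single (Fin.last t)]
  · congr 1
    ext j k
    simp only [Matrix.of_apply]
    by_cases hk : k = Fin.last t
    · rw [if_pos hk, show (j:ℕ)+(k:ℕ) + (if (k:ℕ) = t then 1 else 0) = ((j:ℕ)+(k:ℕ))+1 from (by
        subst hk; simp), iteratedDeriv_succ]
    · rw [if_neg hk, show (j:ℕ)+(k:ℕ) + (if (k:ℕ) = t then 1 else 0) = (j:ℕ)+(k:ℕ) from by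
        rw [if_neg (by simpa [Fin.ext_iff] using hk), add_zero]]
  · intro k _ hk
    have hklt : (k:ℕ) < t := by
      have h1 := k.isLt
      have h2 : (k:ℕ) ≠ t := by simpa [Fin.ext_iff] using hk
      omega
    apply Matrix.det_zero_of_column_eq
      (show k ≠ (⟨(k:ℕ)+1, by omega⟩ : Fin (t+1)) from by simp [Fin.ext_iff])
    intro r
    simp only [Matrix.of_apply, if_pos rfl,
      if_neg (show (⟨(k:ℕ)+1, by omega⟩ : Fin (t+1)) ≠ k from by simp [Fin.ext_iff])]
    show deriv (fun x => iteratedDeriv ((r:ℕ)+(k:ℕ)) f x) z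
        = iteratedDeriv ((r:ℕ)+((k:ℕ)+1)) f z
    rw [show (r:ℕ)+((k:ℕ)+1) = ((r:ℕ)+(k:ℕ))+1 from (by ring), iteratedDeriv_succ]
  · simp

lemma hankel_deriv2 (f : ℝ → ℝ) (hf : ContDiff ℝ ∞ f) (t : ℕ) (z : ℝ) :
    deriv (fun x => (Matrix.of fun j k : Fin (t+1) =>
        iteratedDeriv ((j:ℕ)+(k:ℕ) + (if (k:ℕ) = t then 1 else 0)) f x).det) z
      = (Matrix.of fun j k : Fin (t+1) =>
          iteratedDeriv (((j:ℕ) + (if (j:ℕ) = t then 1 else 0))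
            + ((k:ℕ) + (if (k:ℕ) = t then 1 else 0))) f z).det := by
  rw [deriv_det_row (fun j k x => iteratedDeriv ((j:ℕ)+(k:ℕ) + (if (k:ℕ) = t then 1 else 0)) f x)
      (fun j k => hankel_diff f hf _) z]
  rw [Finset.sum_eq_single (Fin.last t)]
  · congr 1
    ext j k
    simp only [Matrix.of_apply]
    by_cases hj : j = Fin.last t
    · rw [if_pos hj, show ((j:ℕ) + (if (j:ℕ) = t then 1 else 0))
            + ((k:ℕ) + (if (k:ℕ) = t then 1 else 0))
          = ((j:ℕ)+(k:ℕ) + (if (k:ℕ) = t then 1 else 0))+1 from (by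
        subst hj; simp only [Fin.val_last]; split_ifs <;> omega),
        iteratedDeriv_succ]
    · rw [if_neg hj, show ((j:ℕ) + (if (j:ℕ) = t then 1 else 0)) = (j:ℕ) from by
        rw [if_neg (by simpa [Fin.ext_iff] using hj), add_zero], add_assoc]
  · intro j _ hj
    have hjlt : (j:ℕ) < t := by
      have h1 := j.isLt
      have h2 : (j:ℕ) ≠ t := by simpa [Fin.ext_iff] using hj
      omega
    apply Matrix.det_zero_of_row_eq
      (show j ≠ (⟨(j:ℕ)+1, by omega⟩ : Fin (t+1)) from by simp [Fin.ext_iff])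
    funext k
    simp only [Matrix.of_apply, if_pos rfl,
      if_neg (show (⟨(j:ℕ)+1, by omega⟩ : Fin (t+1)) ≠ j from by simp [Fin.ext_iff])]
    show deriv (fun x => iteratedDeriv ((j:ℕ)+(k:ℕ) + (if (k:ℕ) = t then 1 else 0)) f x) z
        = iteratedDeriv (((j:ℕ)+1)+(k:ℕ) + (if (k:ℕ) = t then 1 else 0)) f z
    rw [show ((j:ℕ)+1)+(k:ℕ) + (if (k:ℕ) = t then 1 else 0)
        = ((j:ℕ)+(k:ℕ) + (if (k:ℕ) = t then 1 else 0))+1 from (by ring), iteratedDeriv_succ]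
  · simp

section TodaAux
open Matrix Equiv
open scoped ContDiff

lemma lagL_contDiff (a : ℤ) (α : ℝ) : ContDiff ℝ ∞ (lagL a α) := by
  unfold lagL
  by_cases h : a < 0
  · simp only [if_pos h]
    exact contDiff_const
  · simp only [if_neg h]
    apply ContDiff.sum
    intro k _
    exact ((contDiff_const.mul contDiff_const).mul (contDiff_id.pow k)).div_const _


/-- the Toda-type differential-difference equation. -/
theorem genLag_toda (m n : ℕ) (hm : 1 ≤ m) (hn : 1 ≤ n) (μ : ℝ) (z : ℝ) :
    genLag (m : ℤ) n μ z * iteratedDeriv 2 (genLag (m : ℤ) n μ) z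
        - (deriv (genLag (m : ℤ) n μ) z) ^ 2
      = genLag ((m : ℤ) + 1) (n - 1) μ z * genLag ((m : ℤ) - 1) (n + 1) μ z := by
  obtain ⟨t, rfl⟩ : ∃ t, n = t + 1 := ⟨n - 1, by omega⟩
  set f : ℝ → ℝ := lagL ((m:ℤ) + ((t+1 : ℕ) : ℤ)) (μ + 1) with hfdef
  have hcont : ContDiff ℝ ∞ f := lagL_contDiff _ _
  -- the (t+2)×(t+2) Hankel matrix of f at z
  set A : Matrix (Fin (t+2)) (Fin (t+2)) ℝ :=
    Matrix.of (fun j k : Fin (t+2) => iteratedDeriv ((j:ℕ)+(k:ℕ)) f z) with hAdef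
  have hτ : genLag (m:ℤ) (t+1) μ
      = fun x => (Matrix.of fun j k : Fin (t+1) => iteratedDeriv ((j:ℕ)+(k:ℕ)) f x).det := by
    rw [hfdef]; rfl
  -- index computations for succAbove
  have hsv : ∀ j : Fin (t+1),
      (((⟨t, by omega⟩ : Fin (t+2)).succAbove j : Fin (t+2)) : ℕ)
        = (j:ℕ) + (if (j:ℕ) = t then 1 else 0) := by
    intro j
    rcases Nat.lt_or_ge (j:ℕ) t with h | h
    · rw [Fin.succAbove_of_castSucc_lt _ _ (by simp [Fin.lt_def]; omega)]
      simp only [Fin.coe_castSucc]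
      rw [if_neg (by omega), add_zero]
    · have hjt : (j:ℕ) = t := by have := j.isLt; omega
      rw [Fin.succAbove_of_le_castSucc _ _ (by simp [Fin.le_def]; omega)]
      simp only [Fin.val_succ]
      rw [if_pos hjt]
  have hlastmk : (⟨t+1, by omega⟩ : Fin (t+2)) = Fin.last (t+1) := rfl
  have hsv' : ∀ j : Fin (t+1),
      (((⟨t+1, by omega⟩ : Fin (t+2)).succAbove j : Fin (t+2)) : ℕ) = (j:ℕ) := by
    intro j
    rw [hlastmk, Fin.succAbove_last]
    simp
  -- identify the four corner minors
  have hs11 : (A.submatrix (⟨t+1, by omega⟩ : Fin (t+2)).succAbove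
      (⟨t+1, by omega⟩ : Fin (t+2)).succAbove).det = genLag (m:ℤ) (t+1) μ z := by
    rw [hτ]
    refine congrArg Matrix.det (Matrix.ext fun j k => ?_)
    exact congrArg (fun a => iteratedDeriv a f z) (by rw [hsv', hsv'])
  have hs10 : (A.submatrix (⟨t+1, by omega⟩ : Fin (t+2)).succAbove
      (⟨t, by omega⟩ : Fin (t+2)).succAbove).det
      = (Matrix.of fun j k : Fin (t+1) =>
          iteratedDeriv ((j:ℕ)+(k:ℕ) + (if (k:ℕ) = t then 1 else 0)) f z).det := by
    refine congrArg Matrix.det (Matrix.ext fun j k => ?_)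
    refine congrArg (fun a => iteratedDeriv a f z) ?_
    rw [hsv', hsv]
    ring
  have hs01 : (A.submatrix (⟨t, by omega⟩ : Fin (t+2)).succAbove
      (⟨t+1, by omega⟩ : Fin (t+2)).succAbove).det
      = (Matrix.of fun j k : Fin (t+1) =>
          iteratedDeriv ((j:ℕ)+(k:ℕ) + (if (k:ℕ) = t then 1 else 0)) f z).det := by
    rw [← Matrix.det_transpose]
    refine congrArg Matrix.det (Matrix.ext fun j k => ?_)
    refine congrArg (fun a => iteratedDeriv a f z) ?_
    show ((((⟨t, by omega⟩ : Fin (t+2)).succAbove k : Fin (t+2))) : ℕ)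
        + ((((⟨t+1, by omega⟩ : Fin (t+2)).succAbove j : Fin (t+2))) : ℕ)
      = (j:ℕ)+(k:ℕ) + (if (k:ℕ) = t then 1 else 0)
    rw [hsv', hsv]
    ring
  have hs00 : (A.submatrix (⟨t, by omega⟩ : Fin (t+2)).succAbove
      (⟨t, by omega⟩ : Fin (t+2)).succAbove).det
      = (Matrix.of fun j k : Fin (t+1) =>
          iteratedDeriv (((j:ℕ) + (if (j:ℕ) = t then 1 else 0))
            + ((k:ℕ) + (if (k:ℕ) = t then 1 else 0))) f z).det := by
    refine congrArg Matrix.det (Matrix.ext fun j k => ?_)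
    exact congrArg (fun a => iteratedDeriv a f z) (by rw [hsv, hsv])
  -- derivatives of τ
  have hd1 : deriv (genLag (m:ℤ) (t+1) μ)
      = fun x => (Matrix.of fun j k : Fin (t+1) =>
          iteratedDeriv ((j:ℕ)+(k:ℕ) + (if (k:ℕ) = t then 1 else 0)) f x).det := by
    funext x
    rw [hτ]
    exact hankel_deriv f hcont t x
  have hd2 : iteratedDeriv 2 (genLag (m:ℤ) (t+1) μ) z
      = (Matrix.of fun j k : Fin (t+1) =>
          iteratedDeriv (((j:ℕ) + (if (j:ℕ) = t then 1 else 0))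
            + ((k:ℕ) + (if (k:ℕ) = t then 1 else 0))) f z).det := by
    show iteratedDeriv (1+1) (genLag (m:ℤ) (t+1) μ) z = _
    rw [iteratedDeriv_succ, iteratedDeriv_one, hd1]
    exact hankel_deriv2 f hcont t z
  -- identify RHS factors
  have hinner : (A.submatrix (Fin.castSucc ∘ Fin.castSucc) (Fin.castSucc ∘ Fin.castSucc)).det
      = genLag ((m:ℤ)+1) (t+1-1) μ z := by
    have harg : (m:ℤ)+1 + ((t : ℕ) : ℤ) = (m:ℤ) + ((t+1 : ℕ) : ℤ) := by push_cast; ring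
    show _ = genLag ((m:ℤ)+1) t μ z
    unfold genLag
    rw [harg, ← hfdef]
    refine congrArg Matrix.det (Matrix.ext fun j k => ?_)
    rfl
  have hdetA : A.det = genLag ((m:ℤ)-1) (t+1+1) μ z := by
    have harg : (m:ℤ)-1 + ((t+2 : ℕ) : ℤ) = (m:ℤ) + ((t+1 : ℕ) : ℤ) := by push_cast; ring
    show _ = genLag ((m:ℤ)-1) (t+2) μ z
    unfold genLag
    rw [harg, ← hfdef]
  have hd1z : deriv (genLag (m:ℤ) (t+1) μ) z
      = (Matrix.of fun j k : Fin (t+1) =>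
          iteratedDeriv ((j:ℕ)+(k:ℕ) + (if (k:ℕ) = t then 1 else 0)) f z).det := by
    rw [hτ]
    exact hankel_deriv f hcont t z
  have jm := jacobi_minor t A
  rw [hd2, hd1z, ← hs11, ← hs00, ← hs10, ← hinner, ← hdetA]
  rw [hs01.trans hs10.symm] at jm
  linear_combination -jm
end TodaAux
end
end
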